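/- Let f : ℝ^k → ℝ be a polynomial and Θ = {t ∈ ℝ^k : f(t) ≥ 0}. Suppose θ ∈ Θ with f(θ) = 0. Write f(θ + x) = Σ_{h≥d} f_h(x) as a sum of homogeneous polynomials f_h of degree h, where f_d = f_{θ,min} is the nonzero homogeneous term of smallest degree. Then the tangent cone T_Θ(θ) is contained in {τ ∈ ℝ^k : f_{θ,min}(τ) ≥ 0}. -/
import Mathlib


open Filter Topology

/-- The tangent cone of a set `s` at a point `x`: limits of sequences `αₙ • (θₙ - x)`
with `αₙ > 0` and `θₙ ∈ s` converging to `x`. -/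
def tangentConeAt' {E : Type*} [AddCommGroup E] [Module ℝ E] [TopologicalSpace E]
    (s : Set E) (x : E) : Set E :=
  {y | ∃ (α : ℕ → ℝ) (p : ℕ → E), (∀ n, 0 < α n) ∧ (∀ n, p n ∈ s) ∧
    Tendsto p atTop (𝓝 x) ∧ Tendsto (fun n => α n • (p n - x)) atTop (𝓝 y)}

open MvPolynomial in
lemma eval_smul_of_isHomogeneous {k : ℕ} {φ : MvPolynomial (Fin k) ℝ} {n : ℕ}
    (hφ : φ.IsHomogeneous n) (c : ℝ) (x : Fin k → ℝ) :
    MvPolynomial.eval (c • x) φ = c ^ n * MvPolynomial.eval x φ := by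
  rw [MvPolynomial.eval_eq, MvPolynomial.eval_eq, Finset.mul_sum]
  refine Finset.sum_congr rfl fun d hd => ?_
  have hdeg : ∑ i ∈ d.support, d i = n := by
    have h1 := hφ (MvPolynomial.mem_support_iff.mp hd)
    simpa [Finsupp.weight, Finsupp.sum, Finsupp.linearCombination] using h1
  calc MvPolynomial.coeff d φ * ∏ i ∈ d.support, (c • x) i ^ d i
      = MvPolynomial.coeff d φ * ((∏ i ∈ d.support, c ^ d i) *
          ∏ i ∈ d.support, x i ^ d i) := by
        rw [← Finset.prod_mul_distrib]
        simp [mul_pow]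
    _ = c ^ n * (MvPolynomial.coeff d φ * ∏ i ∈ d.support, x i ^ d i) := by
        rw [Finset.prod_pow_eq_pow_sum, hdeg]; ring

open MvPolynomial in
theorem tangentCone_subset_min_nonneg (k : ℕ) (f : MvPolynomial (Fin k) ℝ)
    (θ : Fin k → ℝ) (h0 : MvPolynomial.eval θ f = 0) (d : ℕ)
    (hd : homogeneousComponent d (bind₁ (fun i => X i + C (θ i)) f) ≠ 0)
    (hmin : ∀ e < d, homogeneousComponent e (bind₁ (fun i => X i + C (θ i)) f) = 0) :
    tangentConeAt' {t : Fin k → ℝ | 0 ≤ MvPolynomial.eval t f} θ ⊆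
      {τ : Fin k → ℝ |
        0 ≤ MvPolynomial.eval τ (homogeneousComponent d (bind₁ (fun i => X i + C (θ i)) f))} := by
  intro τ hτ
  obtain ⟨α, p, hα, hp, hpθ, hlim⟩ := hτ
  set g : MvPolynomial (Fin k) ℝ := bind₁ (fun i => X i + C (θ i)) f with hgdef
  set N := g.totalDegree with hN
  -- evaluation of g
  have heval : ∀ x : Fin k → ℝ, MvPolynomial.eval x g = MvPolynomial.eval (x + θ) f := by
    intro x
    rw [hgdef]
    rw [show (MvPolynomial.eval x) (bind₁ (fun i => X i + C (θ i)) f)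
        = MvPolynomial.aeval x (bind₁ (fun i => X i + C (θ i)) f) from rfl, aeval_bind₁]
    simp [Pi.add_apply]
    rfl
  -- d ≥ 1
  have hd1 : 0 < d := by
    rcases Nat.eq_zero_or_pos d with h | h
    · exfalso
      apply hd
      rw [h, homogeneousComponent_zero]
      have : MvPolynomial.coeff 0 g = 0 := by
        have := heval 0
        rw [zero_add, h0] at this
        rw [← MvPolynomial.constantCoeff_eq]
        rw [← MvPolynomial.eval_zero]
        exact this
      rw [this, map_zero]
    · exact h
  by_cases hτ0 : τ = 0
  · -- τ = 0 : the homogeneous component of positive degree vanishes at 0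
    subst hτ0
    show (0:ℝ) ≤ _
    rw [MvPolynomial.eval_zero, MvPolynomial.constantCoeff_eq, coeff_homogeneousComponent]
    rw [if_neg (by simp; omega)]
  · set x : ℕ → Fin k → ℝ := fun n => p n - θ with hxdef
    set y : ℕ → Fin k → ℝ := fun n => α n • x n with hydef
    have hy : Tendsto y atTop (𝓝 τ) := hlim
    have hx : Tendsto x atTop (𝓝 0) := by
      have := hpθ.sub (tendsto_const_nhds (x := θ))
      simpa using this
    have hxnorm : Tendsto (fun n => ‖x n‖) atTop (𝓝 0) := by
      simpa using hx.norm
    have hτn : 0 < ‖τ‖ := norm_pos_iff.mpr hτ0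
    have h1 : Tendsto (fun n => α n * ‖x n‖) atTop (𝓝 ‖τ‖) := by
      have := hy.norm
      refine this.congr fun n => ?_
      rw [hydef]
      simp [norm_smul, abs_of_pos (hα n)]
    have hne : ∀ᶠ n in atTop, ‖x n‖ ≠ 0 := by
      have hyne : ∀ᶠ n in atTop, y n ≠ 0 := hy.eventually_ne hτ0
      filter_upwards [hyne] with n h hx0
      apply h
      rw [hydef]
      have : x n = 0 := by simpa using hx0
      simp [this]
    have hαtop : Tendsto α atTop atTop := by
      have hb : Tendsto (fun n => ‖x n‖⁻¹) atTop atTop := by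
        apply tendsto_inv_nhdsGT_zero.comp
        rw [tendsto_nhdsWithin_iff]
        refine ⟨hxnorm, ?_⟩
        filter_upwards [hne] with n h
        exact lt_of_le_of_ne (norm_nonneg _) (Ne.symm h)
      have := Filter.Tendsto.pos_mul_atTop hτn h1 hb
      apply this.congr'
      filter_upwards [hne] with n h
      field_simp
    -- key algebraic identity
    have hkey : ∀ n, (α n)^d * MvPolynomial.eval (x n) g
        = ∑ h ∈ Finset.range (N+1),
            ((α n)^(h - d))⁻¹ * MvPolynomial.eval (y n) (homogeneousComponent h g) := by
      intro n
      have hgsum : MvPolynomial.eval (x n) g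
          = ∑ h ∈ Finset.range (N+1), MvPolynomial.eval (x n) (homogeneousComponent h g) := by
        conv_lhs => rw [← sum_homogeneousComponent g]
        rw [map_sum]
      rw [hgsum, Finset.mul_sum]
      refine Finset.sum_congr rfl fun h _ => ?_
      have hev : MvPolynomial.eval (y n) (homogeneousComponent h g)
          = (α n)^h * MvPolynomial.eval (x n) (homogeneousComponent h g) :=
        eval_smul_of_isHomogeneous (homogeneousComponent_isHomogeneous h g) _ _
      rcases lt_or_ge h d with hlt | hge
      · rw [hmin h hlt]
        simp
      · rw [hev]
        have hαne : (α n) ^ (h - d) ≠ 0 := pow_ne_zero _ (hα n).ne'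
        have hpow : (α n)^h = (α n)^(h-d) * (α n)^d := by
          rw [← pow_add]
          congr 1
          omega
        rw [hpow, mul_assoc, inv_mul_cancel_left₀ hαne]
    -- nonnegativity of b
    have hbnn : ∀ n, 0 ≤ (α n)^d * MvPolynomial.eval (x n) g := by
      intro n
      apply mul_nonneg (le_of_lt (pow_pos (hα n) d))
      rw [heval]
      have : x n + θ = p n := by
        rw [hxdef]; simp
      rw [this]
      exact hp n
    -- d ≤ N
    have hdN : d ∈ Finset.range (N+1) := by
      rw [Finset.mem_range]
      by_contra hcon
      exact hd (homogeneousComponent_eq_zero d g (by rw [hN] at hcon; omega))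
    -- limits of each summand
    have hterms : ∀ h ∈ Finset.range (N+1),
        Tendsto (fun n => ((α n)^(h - d))⁻¹ * MvPolynomial.eval (y n) (homogeneousComponent h g))
          atTop (𝓝 (if h = d then MvPolynomial.eval τ (homogeneousComponent d g) else 0)) := by
      intro h _
      rcases lt_trichotomy h d with hlt | heq | hgt
      · rw [if_neg hlt.ne, hmin h hlt]
        simp only [map_zero, mul_zero]
        exact tendsto_const_nhds
      · subst heq
        rw [if_pos rfl]
        have hcont : Tendsto (fun n => MvPolynomial.eval (y n) (homogeneousComponent h g))
            atTop (𝓝 (MvPolynomial.eval τ (homogeneousComponent h g))) :=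
          ((MvPolynomial.continuous_eval _).tendsto τ).comp hy
        refine hcont.congr fun n => ?_
        rw [Nat.sub_self]
        simp
      · rw [if_neg hgt.ne']
        have hinv : Tendsto (fun n => ((α n)^(h - d))⁻¹) atTop (𝓝 0) := by
          apply Filter.Tendsto.inv_tendsto_atTop
          exact (tendsto_pow_atTop (by omega : h - d ≠ 0)).comp hαtop
        have hcont : Tendsto (fun n => MvPolynomial.eval (y n) (homogeneousComponent h g))
            atTop (𝓝 (MvPolynomial.eval τ (homogeneousComponent h g))) :=
          ((MvPolynomial.continuous_eval _).tendsto τ).comp hy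
        simpa using hinv.mul hcont
    have hbsum : Tendsto (fun n => (α n)^d * MvPolynomial.eval (x n) g) atTop
        (𝓝 (MvPolynomial.eval τ (homogeneousComponent d g))) := by
      have hsum := tendsto_finset_sum (Finset.range (N+1)) hterms
      rw [Finset.sum_ite_eq' (Finset.range (N+1)) d
        (fun _ => MvPolynomial.eval τ (homogeneousComponent d g)), if_pos hdN] at hsum
      exact hsum.congr fun n => (hkey n).symm
    exact ge_of_tendsto' hbsum hbnn
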